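/- Let α_R, α_F ∈ [0,1), let R be the real 2×2 matrix with rows (1, −α_R) and (−α_F, 1), let T_D : ℝ ⇒ ℝ be a monotone set-valued operator, and define T_NPN : ℝ² ⇒ ℝ² by T_NPN(v₁,v₂) := {R·(u₁,u₂) : u₁ ∈ T_D(v₁), u₂ ∈ T_D(v₂)}. Then T_NPN is (3π/4)-angle-bounded: ⟨x − y, u − v⟩ ≥ −(√2/2)·‖x − y‖·‖u − v‖ for all (x,u), (y,v) in the graph of T_NPN. -/

import Mathlib

/-- The Ebers–Moll matrix with rows `(1, -αR)` and `(-αF, 1)`, applied to a vector of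
`ℝ²` (with the Euclidean inner product and norm). -/
noncomputable def applyEM (aR aF : ℝ) (w : EuclideanSpace ℝ (Fin 2)) :
    EuclideanSpace ℝ (Fin 2) :=
  (WithLp.equiv 2 (Fin 2 → ℝ)).symm
    ((Matrix.of ![![1, -aR], ![-aF, 1]]).mulVec (WithLp.equiv 2 (Fin 2 → ℝ) w))

/-- A set-valued operator `T_D : ℝ ⇒ ℝ` is monotone if `(u - v)(x - y) ≥ 0` whenever
`u ∈ T_D(x)` and `v ∈ T_D(y)`. -/
def MonotoneSetValued (TD : ℝ → Set ℝ) : Prop :=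
  ∀ ⦃x u y v : ℝ⦄, u ∈ TD x → v ∈ TD y → (u - v) * (x - y) ≥ 0

/-- The Ebers–Moll transistor operator `T_NPN : ℝ² ⇒ ℝ²` built from the diode law `T_D`. -/
noncomputable def TNPN (aR aF : ℝ) (TD : ℝ → Set ℝ) (v : EuclideanSpace ℝ (Fin 2)) :
    Set (EuclideanSpace ℝ (Fin 2)) :=
  {w | ∃ u₁ ∈ TD (v 0), ∃ u₂ ∈ TD (v 1),
    w = applyEM aR aF ((WithLp.equiv 2 (Fin 2 → ℝ)).symm ![u₁, u₂])}

/-- Core linear fact: if `bp ≤ aq` then `D + S ≥ 0`. -/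
lemma auxW (r f a b p q : ℝ) (hr0 : 0 ≤ r) (hr1 : r ≤ 1) (hf0 : 0 ≤ f) (hf1 : f ≤ 1)
    (hap : 0 ≤ a * p) (hbq : 0 ≤ b * q) (h : b * p ≤ a * q)
    (hS : a * p + b * q - r * (a * q) - f * (b * p) ≤ 0) :
    0 ≤ (a * q - b * p + r * (b * q) - f * (a * p)) +
      (a * p + b * q - r * (a * q) - f * (b * p)) := by
  rcases le_total (b * p) 0 with ht | ht
  · rcases le_total 0 (a * q) with hs | hs
    · nlinarith [mul_nonneg (sub_nonneg.2 hr1) hs, mul_nonneg (sub_nonneg.2 hf1) hap,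
        mul_nonneg hr0 hbq, mul_nonneg hf0 (neg_nonneg.2 ht)]
    · have h1 : r * (a * q) ≤ 0 := mul_nonpos_of_nonneg_of_nonpos hr0 hs
      have h2 : f * (b * p) ≤ 0 := mul_nonpos_of_nonneg_of_nonpos hf0 ht
      have h3 : 0 ≤ r * (b * q) := mul_nonneg hr0 hbq
      have h4 : f * (a * p) ≤ a * p := by nlinarith [mul_nonneg (sub_nonneg.2 hf1) hap]
      linarith
  · -- hard case: 0 ≤ t ≤ s
    have hs : 0 ≤ a * q := le_trans ht h
    have h1 : a * p + b * q ≤ a * q + b * p := by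
      nlinarith [mul_nonneg (sub_nonneg.2 hr1) hs, mul_nonneg (sub_nonneg.2 hf1) ht]
    have hu : b * p ≤ a * p := by
      by_contra hc
      push_neg at hc
      nlinarith [mul_pos (show (0:ℝ) < b * p - a * p by linarith)
          (show (0:ℝ) < a * q - a * p by linarith),
        mul_nonneg hap (show (0:ℝ) ≤ a * q + b * p - a * p - b * q by linarith)]
    have hv : b * p ≤ b * q := by
      by_contra hc
      push_neg at hc
      nlinarith [mul_pos (show (0:ℝ) < b * p - b * q by linarith)
          (show (0:ℝ) < a * q - b * q by linarith),
        mul_nonneg hbq (show (0:ℝ) ≤ a * q + b * p - a * p - b * q by linarith)]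
    nlinarith [mul_nonneg (sub_nonneg.2 hr1) (sub_nonneg.2 h),
      mul_nonneg (sub_nonneg.2 hf1) (sub_nonneg.2 hu),
      mul_nonneg hr0 (sub_nonneg.2 hv),
      mul_nonneg (sub_nonneg.2 hf1) ht]

/-- Key quadratic bound: `S² ≤ D²` when `S ≤ 0`. -/
lemma auxKey (r f a b p q : ℝ) (hr0 : 0 ≤ r) (hr1 : r ≤ 1) (hf0 : 0 ≤ f) (hf1 : f ≤ 1)
    (hap : 0 ≤ a * p) (hbq : 0 ≤ b * q)
    (hS : a * (p - r * q) + b * (q - f * p) ≤ 0) :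
    (a * (p - r * q) + b * (q - f * p)) ^ 2 ≤ (a * (q - f * p) - b * (p - r * q)) ^ 2 := by
  rcases le_total (b * p) (a * q) with h | h
  · have hW := auxW r f a b p q hr0 hr1 hf0 hf1 hap hbq h (by nlinarith)
    nlinarith
  · have hW := auxW f r b a q p hf0 hf1 hr0 hr1 hbq hap h (by nlinarith)
    nlinarith

/-- The final scalar inequality. -/
lemma auxFinal (r f a b p q : ℝ) (hr0 : 0 ≤ r) (hr1 : r ≤ 1) (hf0 : 0 ≤ f) (hf1 : f ≤ 1)
    (hap : 0 ≤ a * p) (hbq : 0 ≤ b * q) :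
    a * (p - r * q) + b * (q - f * p) ≥ -(Real.sqrt 2 / 2) *
      (Real.sqrt (a ^ 2 + b ^ 2) * Real.sqrt ((p - r * q) ^ 2 + (q - f * p) ^ 2)) := by
  have hN1 : (0:ℝ) ≤ a ^ 2 + b ^ 2 := by positivity
  have hs2 : Real.sqrt 2 * Real.sqrt 2 = 2 := Real.mul_self_sqrt (by norm_num)
  have hs2n : (0:ℝ) ≤ Real.sqrt 2 := Real.sqrt_nonneg 2
  have hsN : (0:ℝ) ≤ Real.sqrt (a ^ 2 + b ^ 2) *
      Real.sqrt ((p - r * q) ^ 2 + (q - f * p) ^ 2) := by positivity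
  rcases le_or_gt 0 (a * (p - r * q) + b * (q - f * p)) with hpos | hneg
  · nlinarith [mul_nonneg hs2n hsN]
  · have hkey := auxKey r f a b p q hr0 hr1 hf0 hf1 hap hbq (le_of_lt hneg)
    have hsum : 2 * (a * (p - r * q) + b * (q - f * p)) ^ 2 ≤
        (a ^ 2 + b ^ 2) * ((p - r * q) ^ 2 + (q - f * p) ^ 2) := by
      nlinarith [hkey, sq_nonneg (a * (q - f * p) - b * (p - r * q))]
    have e3 : Real.sqrt (2 * (a * (p - r * q) + b * (q - f * p)) ^ 2) ≤
        Real.sqrt ((a ^ 2 + b ^ 2) * ((p - r * q) ^ 2 + (q - f * p) ^ 2)) :=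
      Real.sqrt_le_sqrt hsum
    have e1 : Real.sqrt (2 * (a * (p - r * q) + b * (q - f * p)) ^ 2) =
        Real.sqrt 2 * (-(a * (p - r * q) + b * (q - f * p))) := by
      rw [Real.sqrt_mul (by norm_num), Real.sqrt_sq_eq_abs, abs_of_nonpos hneg.le]
    have e2 : Real.sqrt ((a ^ 2 + b ^ 2) * ((p - r * q) ^ 2 + (q - f * p) ^ 2)) =
        Real.sqrt (a ^ 2 + b ^ 2) * Real.sqrt ((p - r * q) ^ 2 + (q - f * p) ^ 2) :=
      Real.sqrt_mul hN1 _
    rw [e1, e2] at e3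
    have e4 := mul_le_mul_of_nonneg_left e3 hs2n
    have e5 : Real.sqrt 2 * (Real.sqrt 2 * (-(a * (p - r * q) + b * (q - f * p)))) =
        2 * (-(a * (p - r * q) + b * (q - f * p))) := by rw [← mul_assoc, hs2]
    rw [e5] at e4
    linarith

theorem stmt_13 (aR aF : ℝ) (haR : aR ∈ Set.Ico (0 : ℝ) 1) (haF : aF ∈ Set.Ico (0 : ℝ) 1)
    (TD : ℝ → Set ℝ) (hTD : MonotoneSetValued TD) :
    ∀ ⦃x u y v : EuclideanSpace ℝ (Fin 2)⦄, u ∈ TNPN aR aF TD x → v ∈ TNPN aR aF TD y →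
      (inner ℝ (x - y) (u - v) : ℝ) ≥ -(Real.sqrt 2 / 2) * (‖x - y‖ * ‖u - v‖) := by
  obtain ⟨hr0, hr1⟩ := haR
  obtain ⟨hf0, hf1⟩ := haF
  rintro x u y v ⟨u₁, hu₁, u₂, hu₂, rfl⟩ ⟨v₁, hv₁, v₂, hv₂, rfl⟩
  have hap : 0 ≤ (x 0 - y 0) * (u₁ - v₁) := by
    have := hTD hu₁ hv₁; nlinarith
  have hbq : 0 ≤ (x 1 - y 1) * (u₂ - v₂) := by
    have := hTD hu₂ hv₂; nlinarith
  have hcomp : ∀ i, (applyEM aR aF ((WithLp.equiv 2 (Fin 2 → ℝ)).symm ![u₁, u₂]) -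
      applyEM aR aF ((WithLp.equiv 2 (Fin 2 → ℝ)).symm ![v₁, v₂])) i =
      ![(u₁ - v₁) - aR * (u₂ - v₂), (u₂ - v₂) - aF * (u₁ - v₁)] i := by
    intro i
    fin_cases i <;>
      · simp [applyEM, Matrix.mulVec, dotProduct, Fin.sum_univ_two,
          WithLp.equiv_symm_apply, PiLp.toLp_apply, WithLp.equiv_apply, PiLp.sub_apply]
        ring
  have hcomp0 := hcomp 0
  have hcomp1 := hcomp 1
  simp only [Matrix.cons_val_zero, Matrix.cons_val_one, Matrix.head_cons] at hcomp0 hcomp1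
  have hxy0 : (x - y) 0 = x 0 - y 0 := rfl
  have hxy1 : (x - y) 1 = x 1 - y 1 := rfl
  have hinner : (inner ℝ (x - y)
      (applyEM aR aF ((WithLp.equiv 2 (Fin 2 → ℝ)).symm ![u₁, u₂]) -
       applyEM aR aF ((WithLp.equiv 2 (Fin 2 → ℝ)).symm ![v₁, v₂])) : ℝ) =
      (x 0 - y 0) * ((u₁ - v₁) - aR * (u₂ - v₂)) +
      (x 1 - y 1) * ((u₂ - v₂) - aF * (u₁ - v₁)) := by
    rw [PiLp.inner_apply, Fin.sum_univ_two, hcomp0, hcomp1, hxy0, hxy1]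
    simp [RCLike.inner_apply, mul_comm]
  have hnxy : ‖x - y‖ = Real.sqrt ((x 0 - y 0) ^ 2 + (x 1 - y 1) ^ 2) := by
    rw [EuclideanSpace.norm_eq, Fin.sum_univ_two, hxy0, hxy1]
    simp [sq_abs]
  have hnuv : ‖applyEM aR aF ((WithLp.equiv 2 (Fin 2 → ℝ)).symm ![u₁, u₂]) -
      applyEM aR aF ((WithLp.equiv 2 (Fin 2 → ℝ)).symm ![v₁, v₂])‖ =
      Real.sqrt (((u₁ - v₁) - aR * (u₂ - v₂)) ^ 2 + ((u₂ - v₂) - aF * (u₁ - v₁)) ^ 2) := by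
    rw [EuclideanSpace.norm_eq, Fin.sum_univ_two, hcomp0, hcomp1]
    simp [sq_abs]
  rw [hinner, hnxy, hnuv]
  exact auxFinal aR aF (x 0 - y 0) (x 1 - y 1) (u₁ - v₁) (u₂ - v₂)
    hr0 hr1.le hf0 hf1.le hap hbq
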